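/- Let m ≥ 2 be an integer and assume moreover that 2^{1/(m+1)} < β ≤ 2^{1/m}. Then for every n ≥ 1 one has κ(n) ≤ 2^{⌊n/m⌋+1}. -/

import Mathlib

open MeasureTheory Set

/-- The greedy β-transformation with deleted digit set `{0, a₁, a₂}`:
`T x = βx` on `Δ(0) = [0, a₁/β)`, `T x = βx − a₁` on `Δ(a₁) = [a₁/β, a₂/β)`,
and `T x = βx − a₂` on `Δ(a₂) = [a₂/β, a₁)`. -/
noncomputable def greedyT (β a₁ a₂ : ℝ) (x : ℝ) : ℝ :=
  if x < a₁ / β then β * x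
  else if x < a₂ / β then β * x - a₁
  else β * x - a₂

/-- The interval `Δ(b)` associated to a digit `b ∈ {0, a₁, a₂}`. -/
noncomputable def digitInt (β a₁ a₂ : ℝ) (b : ℝ) : Set ℝ :=
  if b = 0 then Set.Ico 0 (a₁ / β)
  else if b = a₁ then Set.Ico (a₁ / β) (a₂ / β)
  else Set.Ico (a₂ / β) a₁

/-- The fundamental interval `Δ(w) = ⋂_{k < n} T⁻ᵏ Δ(b_k)` of a word
`w = (b₀, …, b_{n−1})`. -/
noncomputable def cyl (β a₁ a₂ : ℝ) (w : List ℝ) : Set ℝ :=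
  ⋂ k ∈ Finset.range w.length,
    (greedyT β a₁ a₂)^[k] ⁻¹' digitInt β a₁ a₂ (w.getD k 0)

/-- `w` is a word over the alphabet `A = {0, a₁, a₂}`. -/
def isWord (a₁ a₂ : ℝ) (w : List ℝ) : Prop := ∀ b ∈ w, b = 0 ∨ b = a₁ ∨ b = a₂

/-- The fundamental interval `Δ(w)` is full: `λ(Δ(w)) = a₁/β^|w|`. -/
def isFull (β a₁ a₂ : ℝ) (w : List ℝ) : Prop :=
  volume (cyl β a₁ a₂ w) = ENNReal.ofReal (a₁ / β ^ w.length)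

/-- Condition (6): `a₁ · max (β−1) 1 < a₂ < a₁ · min 2 β`. -/
def condition6 (β a₁ a₂ : ℝ) : Prop :=
  a₁ * max (β - 1) 1 < a₂ ∧ a₂ < a₁ * min 2 β

/-- `w ∈ Bₙ`: `w` is a word of length `n` over `A` with `λ(Δ(w)) > 0`, `Δ(w)`
non-full, and `Δ(w′)` non-full for every nonempty proper prefix `w′` of `w`. -/
def memB (β a₁ a₂ : ℝ) (n : ℕ) (w : List ℝ) : Prop :=
  w.length = n ∧ isWord a₁ a₂ w ∧ 0 < volume (cyl β a₁ a₂ w) ∧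
    ¬ isFull β a₁ a₂ w ∧
    ∀ w' : List ℝ, w' ≠ [] → w' <+: w → w' ≠ w → ¬ isFull β a₁ a₂ w'

/-- `κ(n)`: the number of elements of `Bₙ`. -/
noncomputable def kappa (β a₁ a₂ : ℝ) (n : ℕ) : ℕ :=
  {w : List ℝ | memB β a₁ a₂ n w}.ncard

namespace Stmt8

/-- Bundled standing hypotheses. -/
structure Good (β a₁ a₂ : ℝ) : Prop where
  hβ1 : 1 < β
  hβ32 : β ≤ 3/2
  ha₁ : 0 < a₁
  h12 : a₁ < a₂
  h2a : a₂ < 2 * a₁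
  hba : a₂ < β * a₁
  hab : a₁ * (β - 1) < a₂

variable {β a₁ a₂ : ℝ}


lemma Good.hβ0 (hg : Good β a₁ a₂) : (0:ℝ) < β := lt_trans one_pos hg.hβ1
lemma Good.ha₂ (hg : Good β a₁ a₂) : (0:ℝ) < a₂ := lt_trans hg.ha₁ hg.h12

/-- successor endpoint: `Δ(b) = [b/β, nxt b/β)`. -/
noncomputable def nxt (β a₁ a₂ b : ℝ) : ℝ :=
  if b = 0 then a₁ else if b = a₁ then a₂ else β * a₁

noncomputable def lo (β : ℝ) : List ℝ → ℝ
  | [] => 0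
  | b :: t => (b + lo β t) / β

noncomputable def hi (β a₁ a₂ : ℝ) : List ℝ → ℝ
  | [] => a₁
  | b :: t => min ((b + hi β a₁ a₂ t) / β) (nxt β a₁ a₂ b / β)

/-- the state `c(w) = β^{|w|} λ(Δ(w))`. -/
noncomputable def cc (β a₁ a₂ : ℝ) (w : List ℝ) : ℝ :=
  β ^ w.length * (hi β a₁ a₂ w - lo β w)

def isDigit (a₁ a₂ b : ℝ) : Prop := b = 0 ∨ b = a₁ ∨ b = a₂

lemma nxt_zero (hg : Good β a₁ a₂) : nxt β a₁ a₂ 0 = a₁ := by simp [nxt]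
lemma nxt_one (hg : Good β a₁ a₂) : nxt β a₁ a₂ a₁ = a₂ := by
  simp [nxt, hg.ha₁.ne']
lemma nxt_two (hg : Good β a₁ a₂) : nxt β a₁ a₂ a₂ = β * a₁ := by
  simp [nxt, hg.ha₂.ne', hg.h12.ne']

lemma digit_nonneg (hg : Good β a₁ a₂) {b : ℝ} (hb : isDigit a₁ a₂ b) : 0 ≤ b := by
  rcases hb with hb | hb | hb <;> rw [hb]
  · exact hg.ha₁.le
  · exact hg.ha₂.le

lemma digitInt_eq (hg : Good β a₁ a₂) {b : ℝ} (hb : isDigit a₁ a₂ b) :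
    digitInt β a₁ a₂ b = Set.Ico (b / β) (nxt β a₁ a₂ b / β) := by
  have hβ0 := hg.hβ0
  rcases hb with hb | hb | hb <;> rw [hb]
  · rw [nxt_zero hg]; simp [digitInt]
  · rw [nxt_one hg]; simp [digitInt, hg.ha₁.ne']
  · rw [nxt_two hg]
    simp only [digitInt, hg.ha₂.ne', hg.h12.ne', if_false]
    rw [mul_comm, mul_div_assoc, div_self hβ0.ne', mul_one]

lemma T_eq (hg : Good β a₁ a₂) {b x : ℝ} (hb : isDigit a₁ a₂ b)
    (hx : x ∈ Set.Ico (b / β) (nxt β a₁ a₂ b / β)) :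
    greedyT β a₁ a₂ x = β * x - b := by
  have hβ0 := hg.hβ0
  obtain ⟨hx1, hx2⟩ := hx
  rcases hb with hb | hb | hb <;> rw [hb] at hx1 hx2 ⊢
  · rw [nxt_zero hg] at hx2
    simp only [zero_div] at hx1
    rw [greedyT, if_pos hx2, sub_zero]
  · rw [nxt_one hg] at hx2
    rw [greedyT, if_neg (not_lt.2 hx1), if_pos hx2]
  · rw [nxt_two hg] at hx2
    have hle : a₁ / β ≤ a₂ / β := by gcongr; exact hg.h12.le
    rw [greedyT, if_neg (not_lt.2 (le_trans hle hx1)), if_neg (not_lt.2 hx1)]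

lemma cyl_singleton (b : ℝ) : cyl β a₁ a₂ [b] = digitInt β a₁ a₂ b := by
  ext x
  simp [cyl]

lemma cyl_cons (b : ℝ) (t : List ℝ) :
    cyl β a₁ a₂ (b :: t) = digitInt β a₁ a₂ b ∩ greedyT β a₁ a₂ ⁻¹' cyl β a₁ a₂ t := by
  ext x
  simp only [cyl, Set.mem_iInter, Finset.mem_range, List.length_cons, Set.mem_inter_iff,
    Set.mem_preimage]
  constructor
  · intro h
    refine ⟨by simpa using h 0 (Nat.succ_pos _), ?_⟩
    intro k hk
    have := h (k + 1) (by omega)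
    simpa [Function.iterate_succ_apply] using this
  · rintro ⟨h0, h1⟩ k hk
    cases k with
    | zero => simpa using h0
    | succ k =>
      have := h1 k (by omega)
      simpa [Function.iterate_succ_apply] using this

lemma lo_nonneg (hg : Good β a₁ a₂) {w : List ℝ} (hw : isWord a₁ a₂ w) :
    0 ≤ lo β w := by
  induction w with
  | nil => simp [lo]
  | cons b t ih =>
    have hb : (0:ℝ) ≤ b := digit_nonneg hg (hw b (List.mem_cons_self))
    have ht : 0 ≤ lo β t := ih (fun x hx => hw x (List.mem_cons_of_mem _ hx))
    rw [lo]
    exact div_nonneg (by linarith) hg.hβ0.le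

lemma nxt_le (hg : Good β a₁ a₂) {b : ℝ} (hb : isDigit a₁ a₂ b) :
    nxt β a₁ a₂ b ≤ b + a₁ := by
  rcases hb with hb | hb | hb <;> rw [hb]
  · rw [nxt_zero hg]; linarith
  · rw [nxt_one hg]; linarith [hg.h2a]
  · rw [nxt_two hg]; nlinarith [hg.hab, hg.ha₁]

lemma hi_single (hg : Good β a₁ a₂) {b : ℝ} (hb : isDigit a₁ a₂ b) :
    hi β a₁ a₂ [b] = nxt β a₁ a₂ b / β := by
  rw [hi, hi]
  apply min_eq_right
  gcongr
  · exact hg.hβ0.le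
  · exact nxt_le hg hb

lemma lo_single (b : ℝ) : lo β [b] = b / β := by rw [lo, lo, add_zero]

lemma cyl_eq (hg : Good β a₁ a₂) :
    ∀ (w : List ℝ), isWord a₁ a₂ w → w ≠ [] →
      cyl β a₁ a₂ w = Set.Ico (lo β w) (hi β a₁ a₂ w) := by
  have hβ0 := hg.hβ0
  intro w
  induction w with
  | nil => intro _ h; exact absurd rfl h
  | cons b t ih =>
    intro hw _
    have hb : isDigit a₁ a₂ b := hw b (List.mem_cons_self)
    have hwt : isWord a₁ a₂ t := fun x hx => hw x (List.mem_cons_of_mem _ hx)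
    rcases eq_or_ne t [] with rfl | ht
    · rw [cyl_singleton, digitInt_eq hg hb, lo_single, hi_single hg hb]
    · rw [cyl_cons, ih hwt ht, digitInt_eq hg hb]
      have hlo := lo_nonneg hg hwt
      ext x
      simp only [Set.mem_inter_iff, Set.mem_preimage, Set.mem_Ico]
      constructor
      · rintro ⟨⟨hx1, hx2⟩, hT1, hT2⟩
        rw [T_eq hg hb ⟨hx1, hx2⟩] at hT1 hT2
        constructor
        · rw [lo, div_le_iff₀ hβ0]; linarith
        · rw [hi, lt_min_iff]
          exact ⟨by rw [lt_div_iff₀ hβ0]; linarith, hx2⟩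
      · rintro ⟨h1, h2⟩
        rw [lo, div_le_iff₀ hβ0] at h1
        rw [hi, lt_min_iff, lt_div_iff₀ hβ0] at h2
        have hxmem : x ∈ Set.Ico (b / β) (nxt β a₁ a₂ b / β) := by
          constructor
          · rw [div_le_iff₀ hβ0]; linarith
          · exact h2.2
        refine ⟨hxmem, ?_⟩
        rw [T_eq hg hb hxmem]
        exact ⟨by linarith, by linarith [h2.1]⟩

lemma volume_cyl (hg : Good β a₁ a₂) {w : List ℝ} (hw : isWord a₁ a₂ w) (hne : w ≠ []) :
    volume (cyl β a₁ a₂ w) = ENNReal.ofReal (hi β a₁ a₂ w - lo β w) := by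
  rw [cyl_eq hg w hw hne, Real.volume_Ico]

lemma cc_pos_of_memB (hg : Good β a₁ a₂) {n : ℕ} {w : List ℝ}
    (h : memB β a₁ a₂ n w) (hn : 1 ≤ n) : 0 < cc β a₁ a₂ w := by
  obtain ⟨hlen, hw, hvol, _, _⟩ := h
  have hne : w ≠ [] := by intro h; rw [h] at hlen; simp at hlen; omega
  rw [volume_cyl hg hw hne, ENNReal.ofReal_pos] at hvol
  have := pow_pos hg.hβ0 w.length
  rw [cc]
  positivity

lemma full_iff (hg : Good β a₁ a₂) {w : List ℝ} (hw : isWord a₁ a₂ w) (hne : w ≠ []) :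
    isFull β a₁ a₂ w ↔ cc β a₁ a₂ w = a₁ := by
  have hβp : (0:ℝ) < β ^ w.length := pow_pos hg.hβ0 _
  have hpos : 0 < a₁ / β ^ w.length := div_pos hg.ha₁ hβp
  rw [isFull, volume_cyl hg hw hne]
  constructor
  · intro h
    rcases le_or_gt (hi β a₁ a₂ w - lo β w) 0 with hle | hlt
    · rw [ENNReal.ofReal_eq_zero.2 hle] at h
      exact absurd h.symm (by simp [ENNReal.ofReal_pos.2 hpos, ne_of_gt])
    · rw [ENNReal.ofReal_eq_ofReal_iff hlt.le hpos.le] at h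
      rw [cc, h]
      field_simp
  · intro h
    rw [cc] at h
    have : hi β a₁ a₂ w - lo β w = a₁ / β ^ w.length := by
      field_simp at h ⊢
      linarith [h]
    rw [this]

lemma memB_ne_nil {n : ℕ} {w : List ℝ} (h : memB β a₁ a₂ n w) (hn : 1 ≤ n) : w ≠ [] := by
  intro hw; rw [hw] at h; have := h.1; simp at this; omega

lemma not_full_of_memB (hg : Good β a₁ a₂) {n : ℕ} {w : List ℝ}
    (h : memB β a₁ a₂ n w) (hn : 1 ≤ n) : cc β a₁ a₂ w ≠ a₁ := by
  intro hc
  exact h.2.2.2.1 ((full_iff hg h.2.1 (memB_ne_nil h hn)).2 hc)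

lemma lo_append (hg : Good β a₁ a₂) :
    ∀ (w : List ℝ), isWord a₁ a₂ w → w ≠ [] → ∀ d : ℝ,
      lo β (w ++ [d]) = lo β w + d / β ^ (w.length + 1) := by
  have hβ0 := hg.hβ0
  intro w
  induction w with
  | nil => intro _ h; exact absurd rfl h
  | cons b t ih =>
    intro hw _ d
    rcases eq_or_ne t [] with rfl | ht
    · rw [show ([b] ++ [d] : List ℝ) = b :: [d] from rfl,
        show lo β (b :: [d]) = (b + lo β [d]) / β from rfl, lo_single, lo_single]
      simp only [List.length_singleton]
      field_simp
      ring
    · have hwt : isWord a₁ a₂ t := fun x hx => hw x (List.mem_cons_of_mem _ hx)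
      rw [List.cons_append,
        show lo β (b :: (t ++ [d])) = (b + lo β (t ++ [d])) / β from rfl,
        ih hwt ht d,
        show lo β (b :: t) = (b + lo β t) / β from rfl]
      simp only [List.length_cons]
      field_simp
      ring

lemma hi_append (hg : Good β a₁ a₂) :
    ∀ (w : List ℝ), isWord a₁ a₂ w → w ≠ [] → ∀ d : ℝ, isDigit a₁ a₂ d →
      hi β a₁ a₂ (w ++ [d]) =
        min (hi β a₁ a₂ w) (lo β w + nxt β a₁ a₂ d / β ^ (w.length + 1)) := by
  have hβ0 := hg.hβ0
  intro w
  induction w with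
  | nil => intro _ h; exact absurd rfl h
  | cons b t ih =>
    intro hw _ d hd
    have hb : isDigit a₁ a₂ b := hw b (List.mem_cons_self)
    rcases eq_or_ne t [] with rfl | ht
    · rw [show ([b] ++ [d] : List ℝ) = b :: [d] from rfl,
        show hi β a₁ a₂ (b :: [d]) = min ((b + hi β a₁ a₂ [d]) / β) (nxt β a₁ a₂ b / β)
          from rfl,
        hi_single hg hd, hi_single hg hb, lo_single]
      simp only [List.length_singleton]
      rw [min_comm]
      congr 1
      field_simp
      ring
    · have hwt : isWord a₁ a₂ t := fun x hx => hw x (List.mem_cons_of_mem _ hx)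
      rw [List.cons_append,
        show hi β a₁ a₂ (b :: (t ++ [d])) =
          min ((b + hi β a₁ a₂ (t ++ [d])) / β) (nxt β a₁ a₂ b / β) from rfl,
        ih hwt ht d hd,
        show hi β a₁ a₂ (b :: t) = min ((b + hi β a₁ a₂ t) / β) (nxt β a₁ a₂ b / β)
          from rfl,
        show lo β (b :: t) = (b + lo β t) / β from rfl]
      simp only [List.length_cons]
      rw [← min_add_add_left, ← min_div_div_right hβ0.le]
      have hBB : (b + (lo β t + nxt β a₁ a₂ d / β ^ (t.length + 1))) / β
          = (b + lo β t) / β + nxt β a₁ a₂ d / β ^ (t.length + 1 + 1) := by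
        field_simp
        ring
      rw [hBB, min_right_comm]

lemma cc_single (hg : Good β a₁ a₂) {b : ℝ} (hb : isDigit a₁ a₂ b) :
    cc β a₁ a₂ [b] = nxt β a₁ a₂ b - b := by
  have hβ' : β ≠ 0 := hg.hβ0.ne'
  rw [cc, hi_single hg hb, lo_single, List.length_singleton, pow_one]
  field_simp

lemma cc_append (hg : Good β a₁ a₂) {w : List ℝ} (hw : isWord a₁ a₂ w) (hne : w ≠ [])
    {d : ℝ} (hd : isDigit a₁ a₂ d) :
    cc β a₁ a₂ (w ++ [d]) = min (β * cc β a₁ a₂ w) (nxt β a₁ a₂ d) - d := by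
  have hβ' : β ≠ 0 := hg.hβ0.ne'
  have hP : (0:ℝ) < β ^ (w.length + 1) := pow_pos hg.hβ0 _
  have key : β ^ (w.length + 1) * (lo β w + nxt β a₁ a₂ d / β ^ (w.length + 1) - lo β w)
      = nxt β a₁ a₂ d := by
    field_simp
    ring
  rw [cc, lo_append hg w hw hne d, hi_append hg w hw hne d hd, List.length_append,
    List.length_singleton]
  rcases le_total (hi β a₁ a₂ w) (lo β w + nxt β a₁ a₂ d / β ^ (w.length + 1)) with h | h
  · rw [min_eq_left h]
    have h2 : β * cc β a₁ a₂ w ≤ nxt β a₁ a₂ d := by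
      rw [cc, ← key, show β * (β ^ w.length * (hi β a₁ a₂ w - lo β w))
        = β ^ (w.length + 1) * (hi β a₁ a₂ w - lo β w) from by ring]
      exact mul_le_mul_of_nonneg_left (by linarith) hP.le
    rw [min_eq_left h2, cc]
    field_simp
    try ring
  · rw [min_eq_right h]
    have h2 : nxt β a₁ a₂ d ≤ β * cc β a₁ a₂ w := by
      rw [cc, ← key, show β * (β ^ w.length * (hi β a₁ a₂ w - lo β w))
        = β ^ (w.length + 1) * (hi β a₁ a₂ w - lo β w) from by ring]
      exact mul_le_mul_of_nonneg_left (by linarith) hP.le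
    rw [min_eq_right h2]
    field_simp
    try ring

lemma nxt_sub_le (hg : Good β a₁ a₂) {d : ℝ} (hd : isDigit a₁ a₂ d) :
    nxt β a₁ a₂ d - d ≤ a₁ := by
  rcases hd with hd | hd | hd <;> rw [hd]
  · rw [nxt_zero hg]; linarith
  · rw [nxt_one hg]; linarith [hg.h2a]
  · rw [nxt_two hg]; nlinarith [hg.hab, hg.ha₁]

lemma cc_le (hg : Good β a₁ a₂) {w : List ℝ} (hw : isWord a₁ a₂ w) (hne : w ≠ []) :
    cc β a₁ a₂ w ≤ a₁ := by
  rcases List.eq_nil_or_concat w with rfl | ⟨u, d, rfl⟩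
  · exact absurd rfl hne
  · rw [List.concat_eq_append] at hw ⊢
    have hd : isDigit a₁ a₂ d := hw d (by simp)
    rcases eq_or_ne u [] with rfl | hu
    · rw [List.nil_append, cc_single hg hd]
      exact nxt_sub_le hg hd
    · have hwu : isWord a₁ a₂ u := fun x hx => hw x (by simp [hx])
      rw [cc_append hg hwu hu hd]
      have : min (β * cc β a₁ a₂ u) (nxt β a₁ a₂ d) ≤ nxt β a₁ a₂ d := min_le_right _ _
      linarith [nxt_sub_le hg hd]

lemma cyl_mono {u v : List ℝ} (h : u <+: v) : cyl β a₁ a₂ v ⊆ cyl β a₁ a₂ u := by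
  obtain ⟨t, rfl⟩ := h
  intro x hx
  simp only [cyl, Set.mem_iInter, Finset.mem_range] at hx ⊢
  intro k hk
  have hlen : k < (u ++ t).length := by
    rw [List.length_append]; omega
  have := hx k hlen
  rwa [List.getD_append _ _ _ _ hk] at this

lemma memB_prefix (hg : Good β a₁ a₂) {N : ℕ} {v u : List ℝ}
    (hv : memB β a₁ a₂ N v) (hu : u <+: v) (hne : u ≠ []) :
    memB β a₁ a₂ u.length u := by
  obtain ⟨hlen, hword, hvol, hnf, hpre⟩ := hv
  have hwu : isWord a₁ a₂ u := fun x hx => hword x (hu.subset hx)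
  refine ⟨rfl, hwu, ?_, ?_, ?_⟩
  · exact lt_of_lt_of_le hvol (measure_mono (cyl_mono hu))
  · rcases eq_or_ne u v with rfl | huv
    · exact hnf
    · exact hpre u hne hu huv
  · intro w' hw'ne hw'pre hw'ne2
    refine hpre w' hw'ne (hw'pre.trans hu) ?_
    intro h
    subst h
    have h1 := hw'pre.length_le
    have h2 := hu.length_le
    have := List.IsPrefix.eq_of_length hu (by omega)
    exact hw'ne2 (by rw [this])

/-- Finiteness of the set of words of length `n`. -/
lemma finite_words (a₁ a₂ : ℝ) :
    ∀ n : ℕ, {w : List ℝ | w.length = n ∧ isWord a₁ a₂ w}.Finite := by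
  intro n
  induction n with
  | zero =>
    apply Set.Finite.subset (Set.finite_singleton ([] : List ℝ))
    rintro w ⟨hw, -⟩
    simp [List.length_eq_zero_iff.1 hw]
  | succ n ih =>
    apply Set.Finite.subset
      (Set.Finite.image2 (fun b t => b :: t)
        (((Set.finite_singleton a₂).insert a₁).insert 0) ih)
    rintro w ⟨hwlen, hword⟩
    cases w with
    | nil => simp at hwlen
    | cons b t =>
      refine Set.mem_image2_of_mem ?_ ?_
      · have := hword b (List.mem_cons_self)
        simpa using this
      · exact ⟨by simpa using hwlen, fun x hx => hword x (List.mem_cons_of_mem _ hx)⟩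

lemma finite_B (n : ℕ) : {w : List ℝ | memB β a₁ a₂ n w}.Finite := by
  apply Set.Finite.subset (finite_words a₁ a₂ n)
  rintro w hw
  exact ⟨hw.1, hw.2.1⟩

/-- The counting function. -/
def Cf (m : ℕ) : ℕ → ℕ → ℕ
  | _, 0 => 1
  | 0, k + 1 => 2 * Cf m m k
  | j + 1, k + 1 => Cf m j k
termination_by j k => k

@[simp] lemma Cf_zero (m j : ℕ) : Cf m j 0 = 1 := by
  cases j <;> simp [Cf]

lemma Cf_succ_zero (m k : ℕ) : Cf m 0 (k + 1) = 2 * Cf m m k := by simp [Cf]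

lemma Cf_succ_succ (m j k : ℕ) : Cf m (j + 1) (k + 1) = Cf m j k := by simp [Cf]

lemma Cf_pos (m : ℕ) : ∀ k j, 1 ≤ Cf m j k := by
  intro k
  induction k with
  | zero => intro j; simp
  | succ k ih =>
    intro j
    cases j with
    | zero => rw [Cf_succ_zero]; have := ih m; omega
    | succ j => rw [Cf_succ_succ]; exact ih j

lemma Cf_mono (m : ℕ) : ∀ k j, Cf m j k ≤ Cf m j (k + 1) := by
  intro k
  induction k with
  | zero =>
    intro j
    cases j with
    | zero => simp [Cf_succ_zero]
    | succ j => simp [Cf_succ_succ]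
  | succ k ih =>
    intro j
    cases j with
    | zero => rw [Cf_succ_zero, Cf_succ_zero]; have := ih m; omega
    | succ j => rw [Cf_succ_succ, Cf_succ_succ]; exact ih j

lemma Cf_le (m : ℕ) (hm : 1 ≤ m) : ∀ k j, j ≤ m → Cf m j k ≤ 2 ^ ((k + (m - j)) / m) := by
  intro k
  induction k with
  | zero =>
    intro j hj
    simp only [Cf_zero]
    exact Nat.one_le_two_pow
  | succ k ih =>
    intro j hj
    cases j with
    | zero =>
      rw [Cf_succ_zero]
      have h1 := ih m le_rfl
      have h2 : (k + (m - m)) / m = k / m := by simp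
      rw [h2] at h1
      have h3 : (k + 1 + (m - 0)) / m = (k + 1) / m + 1 := by
        rw [Nat.sub_zero]
        exact Nat.add_div_right _ (by omega)
      rw [h3, pow_succ]
      have h4 : k / m ≤ (k + 1) / m := Nat.div_le_div_right (by omega)
      have h5 : (2:ℕ) ^ (k / m) ≤ 2 ^ ((k+1)/m) := Nat.pow_le_pow_right (by norm_num) h4
      calc 2 * Cf m m k ≤ 2 * 2 ^ (k / m) := by omega
        _ ≤ 2 * 2 ^ ((k+1)/m) := by omega
        _ = 2 ^ ((k+1)/m) * 2 := by ring
    | succ j =>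
      rw [Cf_succ_succ]
      have h1 := ih j (by omega)
      have h2 : k + 1 + (m - (j + 1)) = k + (m - j) := by omega
      rw [h2]
      exact h1

/-- descendants of `w` at depth `k`. -/
def Dset (β a₁ a₂ : ℝ) (k : ℕ) (w : List ℝ) : Set (List ℝ) :=
  {v | memB β a₁ a₂ (w.length + k) v ∧ w <+: v}

lemma Dset_finite (k : ℕ) (w : List ℝ) : (Dset β a₁ a₂ k w).Finite :=
  (finite_B (w.length + k)).subset (fun _ hv => hv.1)

lemma Dset_zero {w : List ℝ} (h : memB β a₁ a₂ w.length w) : Dset β a₁ a₂ 0 w = {w} := by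
  ext v
  simp only [Dset, Set.mem_setOf_eq, Set.mem_singleton_iff, Nat.add_zero]
  constructor
  · rintro ⟨hv, hpre⟩
    exact (List.IsPrefix.eq_of_length hpre (by rw [hv.1])).symm
  · rintro rfl
    exact ⟨h, List.prefix_refl _⟩

lemma child_memB (hg : Good β a₁ a₂) {w : List ℝ} {k : ℕ} {d : ℝ}
    (hne : (Dset β a₁ a₂ k (w ++ [d])).Nonempty) :
    memB β a₁ a₂ (w.length + 1) (w ++ [d]) := by
  obtain ⟨v, hv, hpre⟩ := hne
  have := memB_prefix hg hv hpre (by simp)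
  simpa using this

lemma key (hg : Good β a₁ a₂) {m : ℕ} (hm : 1 ≤ m) (hβm : β ^ m ≤ 2) :
    ∀ k : ℕ, ∀ (w : List ℝ) (n : ℕ), memB β a₁ a₂ n w → 1 ≤ n →
      ∀ j : ℕ, β ^ j * cc β a₁ a₂ w ≤ a₂ →
      (Dset β a₁ a₂ k w).ncard ≤ Cf m j k := by
  have hβ0 := hg.hβ0
  have hβ1 := hg.hβ1
  intro k
  induction k with
  | zero =>
    intro w n hw hn j hj
    rw [Dset_zero (hw.1 ▸ hw)]
    simp
  | succ k ih =>
    intro w n hw hn j hj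
    have hne : w ≠ [] := memB_ne_nil hw hn
    have hword : isWord a₁ a₂ w := hw.2.1
    have hccpos : 0 < cc β a₁ a₂ w := cc_pos_of_memB hg hw hn
    -- decomposition
    have hsub : Dset β a₁ a₂ (k + 1) w ⊆ Dset β a₁ a₂ k (w ++ [0]) ∪ Dset β a₁ a₂ k (w ++ [a₁]) ∪ Dset β a₁ a₂ k (w ++ [a₂]) := by
      rintro v ⟨hv, t, rfl⟩
      have hlenv := hv.1
      cases t with
      | nil =>
        exfalso
        simp only [List.append_nil, List.length_append, List.length_nil] at hlenv
        omega
      | cons d t' =>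
        have hd : isDigit a₁ a₂ d := hv.2.1 d (by simp)
        have hidx : (w ++ [d]).length + k = w.length + (k + 1) := by simp; omega
        have hmem : (w ++ d :: t') ∈ Dset β a₁ a₂ k (w ++ [d]) := by
          refine ⟨?_, ⟨t', by simp⟩⟩
          rw [hidx]
          exact hv
        rcases hd with h | h | h <;> subst h
        · exact Or.inl (Or.inl hmem)
        · exact Or.inl (Or.inr hmem)
        · exact Or.inr hmem
    -- generic child bound
    have hbound : ∀ d : ℝ, isDigit a₁ a₂ d → ∀ j' : ℕ,
        (memB β a₁ a₂ (w.length + 1) (w ++ [d]) → β ^ j' * cc β a₁ a₂ (w ++ [d]) ≤ a₂) →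
        (Dset β a₁ a₂ k (w ++ [d])).ncard ≤ Cf m j' k := by
      intro d hd j' hsafe
      rcases Set.eq_empty_or_nonempty (Dset β a₁ a₂ k (w ++ [d])) with he | hne'
      · rw [he, Set.ncard_empty]
        exact Nat.zero_le _
      · have hmemc := child_memB hg hne'
        exact ih (w ++ [d]) (w.length + 1) (by simpa using hmemc) (by omega) j' (hsafe hmemc)
    -- emptiness criterion
    have hempty : ∀ d : ℝ, (¬ memB β a₁ a₂ (w.length + 1) (w ++ [d])) →
        Dset β a₁ a₂ k (w ++ [d]) = ∅ := by
      intro d hnm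
      rcases Set.eq_empty_or_nonempty (Dset β a₁ a₂ k (w ++ [d])) with he | hne'
      · exact he
      · exact absurd (child_memB hg hne') hnm
    have hcardle : (Dset β a₁ a₂ (k + 1) w).ncard ≤ (Dset β a₁ a₂ k (w ++ [0])).ncard + (Dset β a₁ a₂ k (w ++ [a₁])).ncard + (Dset β a₁ a₂ k (w ++ [a₂])).ncard := by
      refine le_trans (Set.ncard_le_ncard hsub (((Dset_finite k _).union
        (Dset_finite k _)).union (Dset_finite k _))) ?_
      refine le_trans (Set.ncard_union_le _ _) ?_
      have := Set.ncard_union_le (Dset β a₁ a₂ k (w ++ [0])) (Dset β a₁ a₂ k (w ++ [a₁]))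
      omega
    have hd0 : isDigit a₁ a₂ (0:ℝ) := Or.inl rfl
    have hd1 : isDigit a₁ a₂ a₁ := Or.inr (Or.inl rfl)
    have hd2 : isDigit a₁ a₂ a₂ := Or.inr (Or.inr rfl)
    rcases le_or_gt (β * cc β a₁ a₂ w) a₂ with hbr | hbr
    · -- no branching possible
      have hs2 : Dset β a₁ a₂ k (w ++ [a₂]) = ∅ := by
        apply hempty
        intro hmemc
        have hpos := cc_pos_of_memB hg hmemc (by omega)
        rw [cc_append hg hword hne hd2, nxt_two hg] at hpos
        have : min (β * cc β a₁ a₂ w) (β * a₁) ≤ a₂ := le_trans (min_le_left _ _) hbr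
        linarith
      -- safety of a single child with level j - 1
      have hchildsafe : ∀ d : ℝ, isDigit a₁ a₂ d →
          memB β a₁ a₂ (w.length + 1) (w ++ [d]) →
          β ^ (j - 1) * cc β a₁ a₂ (w ++ [d]) ≤ a₂ := by
        intro d hd hmemc
        have hccd : cc β a₁ a₂ (w ++ [d]) ≤ β * cc β a₁ a₂ w := by
          rw [cc_append hg hword hne hd]
          have h1 : min (β * cc β a₁ a₂ w) (nxt β a₁ a₂ d) ≤ β * cc β a₁ a₂ w :=
            min_le_left _ _
          have h2 : (0:ℝ) ≤ d := digit_nonneg hg hd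
          linarith
        cases j with
        | zero =>
          have hccle := cc_le hg hmemc.2.1 (by simp)
          simp only [Nat.zero_sub, pow_zero, one_mul]
          linarith [hg.h12]
        | succ j =>
          simp only [Nat.succ_sub_one]
          have hp : (0:ℝ) < β ^ j := pow_pos hβ0 _
          calc β ^ j * cc β a₁ a₂ (w ++ [d]) ≤ β ^ j * (β * cc β a₁ a₂ w) := by
                gcongr
            _ = β ^ (j + 1) * cc β a₁ a₂ w := by ring
            _ ≤ a₂ := hj
      -- exclusivity : cases on whether β c ≥ a₁
      have hone : (Dset β a₁ a₂ k (w ++ [0])).ncard + (Dset β a₁ a₂ k (w ++ [a₁])).ncard ≤ Cf m (j - 1) k := by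
        by_cases hf : a₁ ≤ β * cc β a₁ a₂ w
        · have hs0 : Dset β a₁ a₂ k (w ++ [0]) = ∅ := by
            apply hempty
            intro hmemc
            have hfull := not_full_of_memB hg hmemc (by omega)
            rw [cc_append hg hword hne hd0, nxt_zero hg, min_eq_right hf, sub_zero] at hfull
            exact hfull rfl
          rw [hs0, Set.ncard_empty, Nat.zero_add]
          exact hbound a₁ hd1 (j - 1) (hchildsafe a₁ hd1)
        · push_neg at hf
          have hs1 : Dset β a₁ a₂ k (w ++ [a₁]) = ∅ := by
            apply hempty
            intro hmemc
            have hpos := cc_pos_of_memB hg hmemc (by omega)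
            rw [cc_append hg hword hne hd1, nxt_one hg] at hpos
            have : min (β * cc β a₁ a₂ w) a₂ ≤ β * cc β a₁ a₂ w := min_le_left _ _
            linarith
          rw [hs1, Set.ncard_empty, Nat.add_zero]
          exact hbound 0 hd0 (j - 1) (hchildsafe 0 hd0)
      rw [hs2, Set.ncard_empty, Nat.add_zero] at hcardle
      refine le_trans hcardle (le_trans hone ?_)
      cases j with
      | zero => simpa using Cf_mono m k 0
      | succ j => simp [Cf_succ_succ]
    · -- branching case : j must be 0
      cases j with
      | succ j =>
        exfalso
        have h1 : β ^ 1 ≤ β ^ (j + 1) := pow_le_pow_right₀ hβ1.le (by omega)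
        rw [pow_one] at h1
        nlinarith
      | zero =>
        have hs0 : Dset β a₁ a₂ k (w ++ [0]) = ∅ := by
          apply hempty
          intro hmemc
          have hfull := not_full_of_memB hg hmemc (by omega)
          rw [cc_append hg hword hne hd0, nxt_zero hg,
            min_eq_right (by linarith [hg.h12] : a₁ ≤ β * cc β a₁ a₂ w), sub_zero] at hfull
          exact hfull rfl
        have hsafe1 : memB β a₁ a₂ (w.length + 1) (w ++ [a₁]) →
            β ^ m * cc β a₁ a₂ (w ++ [a₁]) ≤ a₂ := by
          intro hmemc
          have hpos := cc_pos_of_memB hg hmemc (by omega)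
          have hcc : cc β a₁ a₂ (w ++ [a₁]) ≤ a₂ - a₁ := by
            rw [cc_append hg hword hne hd1, nxt_one hg]
            have := min_le_right (β * cc β a₁ a₂ w) a₂
            linarith
          have hb : β ^ m * cc β a₁ a₂ (w ++ [a₁]) ≤ 2 * cc β a₁ a₂ (w ++ [a₁]) :=
            mul_le_mul_of_nonneg_right hβm hpos.le
          nlinarith [hg.h2a]
        have hsafe2 : memB β a₁ a₂ (w.length + 1) (w ++ [a₂]) →
            β ^ m * cc β a₁ a₂ (w ++ [a₂]) ≤ a₂ := by
          intro hmemc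
          have hpos := cc_pos_of_memB hg hmemc (by omega)
          have hcc : cc β a₁ a₂ (w ++ [a₂]) ≤ β * a₁ - a₂ := by
            rw [cc_append hg hword hne hd2, nxt_two hg]
            have := min_le_right (β * cc β a₁ a₂ w) (β * a₁)
            linarith
          have hb : β ^ m * cc β a₁ a₂ (w ++ [a₂]) ≤ 2 * cc β a₁ a₂ (w ++ [a₂]) :=
            mul_le_mul_of_nonneg_right hβm hpos.le
          nlinarith [hg.hβ32, hg.ha₁, hg.h12]
        have hb1 := hbound a₁ hd1 m hsafe1
        have hb2 := hbound a₂ hd2 m hsafe2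
        rw [hs0, Set.ncard_empty] at hcardle
        rw [Cf_succ_zero]
        omega

lemma memB_one (hg : Good β a₁ a₂) {u : List ℝ} (h : memB β a₁ a₂ 1 u) :
    u = [a₁] ∨ u = [a₂] := by
  obtain ⟨b, rfl⟩ := List.length_eq_one_iff.1 h.1
  have hb : isDigit a₁ a₂ b := h.2.1 b (by simp)
  rcases hb with hb | hb | hb
  · exfalso
    apply h.2.2.2.1
    rw [full_iff hg h.2.1 (by simp), hb, cc_single hg (Or.inl rfl), nxt_zero hg, sub_zero]
  · exact Or.inl (by rw [hb])
  · exact Or.inr (by rw [hb])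

lemma root_bound (hg : Good β a₁ a₂) {m : ℕ} (hm : 1 ≤ m) (hβm : β ^ m ≤ 2)
    {a : ℝ} (ha : isDigit a₁ a₂ a) (hsafe : β ^ m * cc β a₁ a₂ [a] ≤ a₂) (k : ℕ) :
    (Dset β a₁ a₂ k [a]).ncard ≤ Cf m m k := by
  rcases Set.eq_empty_or_nonempty (Dset β a₁ a₂ k [a]) with he | hne'
  · rw [he, Set.ncard_empty]; exact Nat.zero_le _
  · obtain ⟨v, hv, hpre⟩ := hne'
    have hmem : memB β a₁ a₂ 1 [a] := by
      have := memB_prefix hg hv hpre (by simp)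
      simpa using this
    exact key hg hm hβm k [a] 1 hmem le_rfl m hsafe

theorem main_bound (hg : Good β a₁ a₂) {m : ℕ} (hm : 1 ≤ m) (hβm : β ^ m ≤ 2)
    (n : ℕ) (hn : 1 ≤ n) : kappa β a₁ a₂ n ≤ 2 ^ (n / m + 1) := by
  have hβ0 := hg.hβ0
  -- subset of the two root descendant sets
  have hsub : {w : List ℝ | memB β a₁ a₂ n w} ⊆
      Dset β a₁ a₂ (n - 1) [a₁] ∪ Dset β a₁ a₂ (n - 1) [a₂] := by
    intro w hw
    have hne : w ≠ [] := memB_ne_nil hw hn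
    obtain ⟨b, t, rfl⟩ := List.exists_cons_of_ne_nil hne
    have hpre : [b] <+: (b :: t) := ⟨t, rfl⟩
    have hmem1 : memB β a₁ a₂ 1 [b] := by
      have := memB_prefix hg hw hpre (by simp)
      simpa using this
    have hidx : ([b] : List ℝ).length + (n - 1) = n := by simp; omega
    rcases memB_one hg hmem1 with hb | hb
    · left
      have hb' : b = a₁ := by injection hb
      subst hb'
      exact ⟨by rw [hidx]; exact hw, hpre⟩
    · right
      have hb' : b = a₂ := by injection hb
      subst hb'
      exact ⟨by rw [hidx]; exact hw, hpre⟩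
  have hsafe1 : β ^ m * cc β a₁ a₂ [a₁] ≤ a₂ := by
    rw [cc_single hg (Or.inr (Or.inl rfl)), nxt_one hg]
    have h1 : (0:ℝ) ≤ a₂ - a₁ := by linarith [hg.h12]
    have hb : β ^ m * (a₂ - a₁) ≤ 2 * (a₂ - a₁) := mul_le_mul_of_nonneg_right hβm h1
    nlinarith [hg.h2a]
  have hsafe2 : β ^ m * cc β a₁ a₂ [a₂] ≤ a₂ := by
    rw [cc_single hg (Or.inr (Or.inr rfl)), nxt_two hg]
    have h1 : (0:ℝ) ≤ β * a₁ - a₂ := by linarith [hg.hba]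
    have hb : β ^ m * (β * a₁ - a₂) ≤ 2 * (β * a₁ - a₂) := mul_le_mul_of_nonneg_right hβm h1
    nlinarith [hg.hβ32, hg.ha₁, hg.h12]
  have h1 := root_bound hg hm hβm (Or.inr (Or.inl rfl)) hsafe1 (n - 1)
  have h2 := root_bound hg hm hβm (Or.inr (Or.inr rfl)) hsafe2 (n - 1)
  have hcard : kappa β a₁ a₂ n ≤ 2 * Cf m m (n - 1) := by
    rw [kappa]
    refine le_trans (Set.ncard_le_ncard hsub ((Dset_finite _ _).union (Dset_finite _ _))) ?_
    have := Set.ncard_union_le (Dset β a₁ a₂ (n - 1) [a₁]) (Dset β a₁ a₂ (n - 1) [a₂])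
    omega
  have hCf : Cf m m (n - 1) ≤ 2 ^ (n / m) := by
    have := Cf_le m hm (n - 1) m le_rfl
    have heq : (n - 1 + (m - m)) / m = (n - 1) / m := by simp
    rw [heq] at this
    refine le_trans this (Nat.pow_le_pow_right (by norm_num) ?_)
    exact Nat.div_le_div_right (by omega)
  calc kappa β a₁ a₂ n ≤ 2 * Cf m m (n - 1) := hcard
    _ ≤ 2 * 2 ^ (n / m) := by omega
    _ = 2 ^ (n / m + 1) := by ring

end Stmt8

/-- Let `m ≥ 2` be an integer and assume moreover that
`2^(1/(m+1)) < β ≤ 2^(1/m)`. Then for every `n ≥ 1` one has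
`κ(n) ≤ 2^(⌊n/m⌋+1)`. -/
theorem stmt8 (β a₁ a₂ : ℝ) (hβ1 : 1 < β) (hβ3 : β < 3)
    (ha₁ : 0 < a₁) (h12 : a₁ < a₂) (hc : condition6 β a₁ a₂)
    (m : ℕ) (hm : 2 ≤ m)
    (hβlo : (2 : ℝ) ^ ((1 : ℝ) / (m + 1)) < β)
    (hβhi : β ≤ (2 : ℝ) ^ ((1 : ℝ) / m)) :
    ∀ n : ℕ, 1 ≤ n → kappa β a₁ a₂ n ≤ 2 ^ (n / m + 1) := by
  intro n hn
  have hm0 : (m:ℝ) ≠ 0 := by positivity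
  have hpow : ((2:ℝ) ^ ((1:ℝ)/m)) ^ m = 2 := by
    rw [← Real.rpow_natCast ((2:ℝ) ^ ((1:ℝ)/m)) m, ← Real.rpow_mul (by norm_num)]
    rw [one_div, inv_mul_cancel₀ hm0, Real.rpow_one]
  have hβm : β ^ m ≤ 2 := by
    rw [← hpow]
    exact pow_le_pow_left₀ (by linarith) hβhi m
  have hβ32 : β ≤ 3 / 2 := by
    have h2 : β ^ 2 ≤ β ^ m := pow_le_pow_right₀ hβ1.le hm
    have : β ^ 2 ≤ 2 := le_trans h2 hβm
    nlinarith
  have hminβ : min 2 β = β := min_eq_right (by linarith)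
  have hba : a₂ < β * a₁ := by
    have := hc.2
    rw [hminβ] at this
    linarith [this]
  have h2a : a₂ < 2 * a₁ := by
    have hmin2 : a₁ * min 2 β ≤ a₁ * 2 := by
      apply mul_le_mul_of_nonneg_left (min_le_left _ _) ha₁.le
    linarith [hc.2]
  have hab : a₁ * (β - 1) < a₂ := by
    have : a₁ * (β - 1) ≤ a₁ * max (β - 1) 1 :=
      mul_le_mul_of_nonneg_left (le_max_left _ _) ha₁.le
    linarith [hc.1]
  have hg : Stmt8.Good β a₁ a₂ := ⟨hβ1, hβ32, ha₁, h12, h2a, hba, hab⟩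
  exact Stmt8.main_bound hg (by omega) hβm n hn
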